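/- arXiv:2003.09153 — 5 statements merged into one kernel-verified Lean document; each statement's English description precedes it below -/
import Mathlib

section
/- Let m, n, k, r, t, α be natural numbers with n > 0, t > 0, 1 ≤ k ≤ n, α = gcd(m, n), r·n = t·m − α, and t > α·n. Then ⌈m·k/n⌉ − 1 = ⌊r·k/t⌋. -/
/-- Moulin's lemma: the proportional veto power ⌈mk/n⌉ − 1 equals ⌊rk/t⌋
when r·n = t·m − α (i.e. r·n + α = t·m), α = gcd(m,n) and t > α·n. -/
theorem moulin_lemma (m n k r t α : ℕ) (hn : 0 < n) (ht : 0 < t)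
    (hk1 : 1 ≤ k) (hkn : k ≤ n) (hα : α = Nat.gcd m n)
    (hrt : r * n + α = t * m) (htα : t > α * n) :
    ⌈(m * k : ℚ) / n⌉ - 1 = ⌊(r * k : ℚ) / t⌋ := by
  have hα1 : 1 ≤ α := by
    rw [hα]; exact Nat.gcd_pos_of_pos_right m hn
  have hm : 1 ≤ m := by
    rcases Nat.eq_zero_or_pos m with h | h
    · subst h; simp at hrt; omega
    · exact h
  have hmk : 1 ≤ m * k := Nat.mul_pos hm hk1
  set q : ℕ := (m * k - 1) / n with hqdef
  have h1 : q * n ≤ m * k - 1 := Nat.div_mul_le_self _ _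
  have h2 : m * k - 1 < (q + 1) * n := by
    have e1 := Nat.div_add_mod (m * k - 1) n
    rw [← hqdef] at e1
    have e2 := Nat.mod_lt (m * k - 1) hn
    nlinarith [e1, e2]
  have hq3 : q * n < m * k := lt_of_le_of_lt h1 (Nat.sub_lt hmk one_pos)
  have hq4 : m * k ≤ (q + 1) * n := by
    have := Nat.succ_le_of_lt h2
    have h3 : m * k - 1 + 1 = m * k := Nat.sub_add_cancel hmk
    omega
  set d : ℕ := m * k - q * n with hddef
  have hd : q * n + d = m * k := Nat.add_sub_cancel' hq3.le
  have hd1 : 1 ≤ d := by omega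
  have hd2 : d ≤ n := by
    have : (q + 1) * n = q * n + n := by ring
    omega
  have hαd : α ≤ d := by
    have hdvd : α ∣ d := by
      rw [hddef, hα]
      exact Nat.dvd_sub ((Nat.gcd_dvd_left m n).mul_right k)
        ((Nat.gcd_dvd_right m n).mul_left q)
    exact Nat.le_of_dvd hd1 hdvd
  have hmain : r * k * n + α * k = t * (q * n) + t * d := by
    calc r * k * n + α * k = (r * n + α) * k := by ring
    _ = t * m * k := by rw [hrt]
    _ = t * (m * k) := by ring
    _ = t * (q * n + d) := by rw [hd]
    _ = t * (q * n) + t * d := by ring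
  have lower : q * t ≤ r * k := by
    have h : q * t * n ≤ r * k * n := by nlinarith
    exact Nat.le_of_mul_le_mul_right h hn
  have upper : r * k < (q + 1) * t := by
    have h : r * k * n < (q + 1) * t * n := by nlinarith
    exact Nat.lt_of_mul_lt_mul_right h
  have hn' : (0 : ℚ) < n := by exact_mod_cast hn
  have ht' : (0 : ℚ) < t := by exact_mod_cast ht
  have hceil : ⌈(m * k : ℚ) / n⌉ = (q : ℤ) + 1 := by
    rw [Int.ceil_eq_iff]
    have hq3' : (q : ℚ) * n < m * k := by exact_mod_cast hq3
    have hq4' : (m : ℚ) * k ≤ (q + 1) * n := by exact_mod_cast hq4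
    constructor
    · push_cast
      rw [lt_div_iff₀ hn']
      linarith
    · push_cast
      rw [div_le_iff₀ hn']
      linarith
  have hfloor : ⌊(r * k : ℚ) / t⌋ = (q : ℤ) := by
    rw [Int.floor_eq_iff]
    have lower' : (q : ℚ) * t ≤ r * k := by exact_mod_cast lower
    have upper' : (r : ℚ) * k < (q + 1) * t := by exact_mod_cast upper
    constructor
    · push_cast
      rw [le_div_iff₀ ht']
      linarith
    · push_cast
      rw [div_lt_iff₀ ht']
      linarith
  rw [hceil, hfloor]
  ring
end

section
/- Fix n voters with linear preference orders over m candidates (m, n ≥ 1), a candidate c, coefficients r, t with r·n = t·m − gcd(m,n) and t > n·gcd(m,n). Construct the bipartite graph G with r copies of each voter on the left, t copies of each candidate other than c on the right, and an edge between a copy of voter i and a copy of candidate d whenever i prefers d to c. Then c is blocked (i.e., there exists a coalition T and a set B of candidates with every voter in T preferring every member of B to c and m − |B| ≤ ⌈m·|T|/n⌉ − 1) if and only if G contains a biclique K_{x,y} with x + y ≥ t·m. -/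
/-- Coalition `T` blocks candidate `c` under the proportional veto function:
there is a set `B` of candidates, each preferred to `c` by every voter in `T`,
with `m − |B| ≤ ⌈m·|T|/n⌉ − 1`. -/
def Blocks (m n : ℕ) (pref : Fin n → Fin m → Fin m → Prop)
    (T : Finset (Fin n)) (c : Fin m) : Prop :=
  ∃ B : Finset (Fin m), (∀ i ∈ T, ∀ b ∈ B, pref i b c) ∧
    (m : ℤ) - B.card ≤ ⌈(m * T.card : ℚ) / n⌉ - 1

/-- The key ceiling bound: `n·⌈mk/n⌉ ≤ mk + n - gcd m n`. -/
lemma ceil_mul_div_bound (m n k : ℕ) (hn : 0 < n) :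
    (n : ℤ) * ⌈(m * k : ℚ) / n⌉ ≤ m * k + n - Nat.gcd m n := by
  have hn' : (0 : ℚ) < n := by exact_mod_cast hn
  set C : ℤ := ⌈(m * k : ℚ) / n⌉ with hC
  have h1 : (m * k : ℤ) ≤ n * C := by
    have h := Int.le_ceil ((m * k : ℚ) / n)
    rw [div_le_iff₀ hn'] at h
    have : ((m * k : ℤ) : ℚ) ≤ ((n : ℤ) * C : ℚ) := by push_cast; linarith
    exact_mod_cast this
  have h2 : (n : ℤ) * C < m * k + n := by
    have h := Int.ceil_lt_add_one ((m * k : ℚ) / n)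
    have : ((n : ℤ) * C : ℚ) < ((m * k + n : ℤ) : ℚ) := by
      push_cast
      have := (mul_lt_mul_iff_right₀ hn').mpr h
      rw [mul_add, mul_div_cancel₀ _ (ne_of_gt hn')] at this
      linarith
    exact_mod_cast this
  have hdvd : (Nat.gcd m n : ℤ) ∣ (m * k + n) - n * C := by
    apply dvd_sub
    · exact dvd_add (Dvd.dvd.mul_right (Int.natCast_dvd_natCast.mpr (Nat.gcd_dvd_left m n)) _)
        (Int.natCast_dvd_natCast.mpr (Nat.gcd_dvd_right m n))
    · exact Dvd.dvd.mul_right (Int.natCast_dvd_natCast.mpr (Nat.gcd_dvd_right m n)) _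
  have hpos : 0 < (m * k + n) - n * C := by linarith
  have := Int.le_of_dvd hpos hdvd
  linarith

/-- Candidate `c` is blocked iff the blocking graph of `c` — with `r` copies of
each voter on the left, `t` copies of each candidate other than `c` on the right,
and edges joining copies of voter `i` to copies of candidate `d` whenever
`i` prefers `d` to `c` — contains a biclique with at least `t·m` vertices. -/
theorem blocked_iff_biclique (m n r t : ℕ) (hm : 0 < m) (hn : 0 < n)
    (pref : Fin n → Fin m → Fin m → Prop)
    (hlin : ∀ i, IsStrictTotalOrder (Fin m) (pref i))
    (c : Fin m)
    (hrt : r * n + Nat.gcd m n = t * m) (ht : t > Nat.gcd m n * n) :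
    (∃ T : Finset (Fin n), Blocks m n pref T c) ↔
      ∃ (X : Finset (Fin n × Fin r)) (Y : Finset ({d : Fin m // d ≠ c} × Fin t)),
        (∀ p ∈ X, ∀ q ∈ Y, pref p.1 (q : {d : Fin m // d ≠ c} × Fin t).1.1 c) ∧
        t * m ≤ X.card + Y.card := by
  have hg : 0 < Nat.gcd m n := Nat.gcd_pos_of_pos_left n hm
  have hrt' : (r : ℤ) * n + (Nat.gcd m n : ℤ) = t * m := by exact_mod_cast hrt
  have ht' : (Nat.gcd m n : ℤ) * n < t := by exact_mod_cast ht
  have hg' : (1 : ℤ) ≤ (Nat.gcd m n : ℤ) := by exact_mod_cast hg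
  have hn' : (0 : ℤ) < n := by exact_mod_cast hn
  have htn : (n : ℤ) < t := by nlinarith
  constructor
  · rintro ⟨T, B, hTB, hcard⟩
    -- T is nonempty
    have hBm : B.card ≤ m := by
      simpa using Finset.card_le_card (Finset.subset_univ B)
    have hTne : T.Nonempty := by
      rcases T.eq_empty_or_nonempty with h | h
      · exfalso
        rw [h] at hcard
        simp at hcard
        omega
      · exact h
    obtain ⟨i0, hi0⟩ := hTne
    have hBc : ∀ b ∈ B, b ≠ c := by
      intro b hb hbc
      haveI := hlin i0
      exact irrefl c (hbc ▸ hTB i0 hi0 b hb)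
    refine ⟨T ×ˢ Finset.univ, (B.subtype (· ≠ c)) ×ˢ Finset.univ, ?_, ?_⟩
    · intro p hp q hq
      rw [Finset.mem_product] at hp hq
      exact hTB p.1 hp.1 q.1.1 (Finset.mem_subtype.mp hq.1)
    · have hX : (T ×ˢ (Finset.univ : Finset (Fin r))).card = T.card * r := by
        rw [Finset.card_product, Finset.card_univ, Fintype.card_fin]
      have hBsub : (B.subtype (· ≠ c)).card = B.card := by
        rw [Finset.card_subtype, Finset.filter_true_of_mem hBc]
      have hY : ((B.subtype (· ≠ c)) ×ˢ (Finset.univ : Finset (Fin t))).card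
          = B.card * t := by
        rw [Finset.card_product, Finset.card_univ, Fintype.card_fin, hBsub]
      rw [hX, hY]
      -- the arithmetic
      set k := T.card with hk
      set b := B.card with hb
      have hkn : k ≤ n := by
        simpa using Finset.card_le_card (Finset.subset_univ T)
      have hceil : (n : ℤ) * ⌈(m * k : ℚ) / n⌉ ≤ m * k + n - Nat.gcd m n :=
        ceil_mul_div_bound m n k hn
      set C : ℤ := ⌈(m * k : ℚ) / n⌉ with hC
      have hkt : (k : ℤ) ≤ t := by
        have : (k : ℤ) ≤ n := by exact_mod_cast hkn
        linarith
      have ht0 : (0 : ℤ) ≤ t := by positivity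
      have e1 : (t : ℤ) * (n * C) ≤ t * (m * k + n - Nat.gcd m n) :=
        mul_le_mul_of_nonneg_left hceil ht0
      have e2 : (n : ℤ) * t * ((m : ℤ) + 1 - C) ≤ n * t * b := by
        apply mul_le_mul_of_nonneg_left _ (by positivity)
        linarith
      have e3 : (Nat.gcd m n : ℤ) * k ≤ (Nat.gcd m n : ℤ) * t :=
        mul_le_mul_of_nonneg_left hkt (by linarith)
      have e4 : (k : ℤ) * ((r : ℤ) * n + (Nat.gcd m n : ℤ)) = k * (t * m) := by
        rw [hrt']
      have key : (n : ℤ) * (t * m) ≤ n * (k * r + b * t) := by nlinarith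
      have : (t : ℤ) * m ≤ k * r + b * t := le_of_mul_le_mul_left key hn'
      exact_mod_cast this
  · rintro ⟨X, Y, hedge, hcard⟩
    set T : Finset (Fin n) := X.image Prod.fst with hT
    set B : Finset (Fin m) := Y.image (fun q => q.1.1) with hB
    have hXle : X.card ≤ T.card * r := by
      have hsub : X ⊆ T ×ˢ Finset.univ := by
        intro p hp
        rw [Finset.mem_product]
        exact ⟨Finset.mem_image_of_mem Prod.fst hp, Finset.mem_univ _⟩
      calc X.card ≤ (T ×ˢ (Finset.univ : Finset (Fin r))).card := Finset.card_le_card hsub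
        _ = T.card * r := by rw [Finset.card_product, Finset.card_univ, Fintype.card_fin]
    have hYle : Y.card ≤ B.card * t := by
      have hsub : Y ⊆ (B.subtype (· ≠ c)) ×ˢ Finset.univ := by
        intro q hq
        rw [Finset.mem_product]
        refine ⟨Finset.mem_subtype.mpr ?_, Finset.mem_univ _⟩
        exact Finset.mem_image_of_mem _ hq
      calc Y.card ≤ ((B.subtype (· ≠ c)) ×ˢ (Finset.univ : Finset (Fin t))).card :=
            Finset.card_le_card hsub
        _ ≤ B.card * t := by
            rw [Finset.card_product, Finset.card_univ, Fintype.card_fin]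
            exact Nat.mul_le_mul_right t (by
              rw [Finset.card_subtype]
              exact Finset.card_le_card (Finset.filter_subset _ _))
    have hBm : B.card ≤ m - 1 := by
      have hsub : B ⊆ Finset.univ.erase c := by
        intro b hb
        rw [hB, Finset.mem_image] at hb
        obtain ⟨q, _, rfl⟩ := hb
        exact Finset.mem_erase.mpr ⟨q.1.2, Finset.mem_univ _⟩
      calc B.card ≤ (Finset.univ.erase c).card := Finset.card_le_card hsub
        _ = m - 1 := by
            rw [Finset.card_erase_of_mem (Finset.mem_univ c), Finset.card_univ,
              Fintype.card_fin]
    have hmain : t * m ≤ T.card * r + B.card * t := by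
      calc t * m ≤ X.card + Y.card := hcard
        _ ≤ T.card * r + B.card * t := Nat.add_le_add hXle hYle
    -- T.card ≥ 1
    have htpos : 0 < t := by omega
    have hkpos : 0 < T.card := by
      by_contra h
      push_neg at h
      interval_cases h' : T.card
      · simp only [Nat.zero_mul, Nat.zero_add] at hmain
        have : B.card * t ≤ (m - 1) * t := Nat.mul_le_mul_right t hBm
        have : t * m ≤ (m - 1) * t := le_trans hmain this
        nlinarith [Nat.sub_lt hm Nat.one_pos]
    refine ⟨T, B, ?_, ?_⟩
    · intro i hi b hb
      rw [hT, Finset.mem_image] at hi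
      rw [hB, Finset.mem_image] at hb
      obtain ⟨p, hp, rfl⟩ := hi
      obtain ⟨q, hq, rfl⟩ := hb
      exact hedge p hp q hq
    · set k := T.card with hk
      set b := B.card with hb
      have hmain' : (t : ℤ) * m ≤ k * r + b * t := by exact_mod_cast hmain
      have hk1 : (1 : ℤ) ≤ k := by exact_mod_cast hkpos
      -- derive m*n < m*k + b*n
      have key : (m : ℤ) * n < m * k + b * n := by
        have e4 : (k : ℤ) * ((r : ℤ) * n + (Nat.gcd m n : ℤ)) = k * (t * m) := by
          rw [hrt']
        have e5 : (n : ℤ) * ((t : ℤ) * m) ≤ n * (k * r + b * t) :=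
          mul_le_mul_of_nonneg_left hmain' (by positivity)
        have ht0 : (0 : ℤ) < t := by exact_mod_cast htpos
        have e6 : (1 : ℤ) ≤ (k : ℤ) * (Nat.gcd m n : ℤ) := by
          have := mul_le_mul hk1 hg' one_pos.le (by linarith : (0:ℤ) ≤ (k:ℤ))
          linarith
        have e7 : (t : ℤ) * ((m : ℤ) * n) < t * ((m : ℤ) * k + b * n) := by
          linarith
        exact lt_of_mul_lt_mul_left e7 ht0.le
      have hlt : ((m : ℤ) - b) < ⌈(m * k : ℚ) / n⌉ := by
        rw [Int.lt_ceil]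
        rw [lt_div_iff₀ (by exact_mod_cast hn : (0 : ℚ) < n)]
        have key' : ((m : ℚ)) * n < m * k + b * n := by exact_mod_cast key
        push_cast
        linarith
      linarith
end

section
/- The proportional veto core is nonempty: for any profile of n linear orders over m candidates (m, n ≥ 1), there exists a candidate c that is not blocked by any coalition under the proportional veto function v(T) = ⌈m·|T|/n⌉ − 1. -/
open Finset

namespace VetoProof

variable {m n : ℕ}

/-- State of the veto process after `j` unit vetoes. Voter `j / m % n` acts at step `j`.
Each unit veto goes to the acting voter's worst candidate among those with mass `< n`,
unless at most one such candidate remains. -/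
noncomputable def vS (pref : Fin n → Fin m → Fin m → Prop)
    (hlin : ∀ i, IsStrictTotalOrder (Fin m) (pref i)) (hn : 0 < n) : ℕ → Fin m → ℕ
  | 0 => fun _ => 0
  | j + 1 =>
    let s := vS pref hlin hn j
    let R := Finset.univ.filter fun x => s x < n
    if h : 2 ≤ R.card then
      letI : DecidableRel (pref ⟨j / m % n, Nat.mod_lt _ hn⟩) := fun _ _ => Classical.dec _
      haveI := hlin ⟨j / m % n, Nat.mod_lt _ hn⟩
      let w := @Finset.max' _ (linearOrderOfSTO (pref ⟨j / m % n, Nat.mod_lt _ hn⟩)) R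
        (Finset.card_pos.mp (by omega))
      Function.update s w (s w + 1)
    else s

variable (pref : Fin n → Fin m → Fin m → Prop)
  (hlin : ∀ i, IsStrictTotalOrder (Fin m) (pref i)) (hn : 0 < n)

lemma vS_step (j : ℕ) :
    (vS pref hlin hn (j+1) = vS pref hlin hn j ∧
      ¬ 2 ≤ (Finset.univ.filter fun x => vS pref hlin hn j x < n).card) ∨
    ∃ w ∈ (Finset.univ.filter fun x => vS pref hlin hn j x < n),
      2 ≤ (Finset.univ.filter fun x => vS pref hlin hn j x < n).card ∧
      (∀ y ∈ (Finset.univ.filter fun x => vS pref hlin hn j x < n),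
        y = w ∨ pref ⟨j / m % n, Nat.mod_lt _ hn⟩ y w) ∧
      vS pref hlin hn (j+1) =
        Function.update (vS pref hlin hn j) w (vS pref hlin hn j w + 1) := by
  rw [vS]
  dsimp only
  split_ifs with h
  · right
    letI : DecidableRel (pref ⟨j / m % n, Nat.mod_lt _ hn⟩) := fun _ _ => Classical.dec _
    haveI := hlin ⟨j / m % n, Nat.mod_lt _ hn⟩
    letI L : LinearOrder (Fin m) := linearOrderOfSTO (pref ⟨j / m % n, Nat.mod_lt _ hn⟩)
    exact ⟨_, @Finset.max'_mem _ L _ _, h, fun y hy => @Finset.le_max' _ L _ y hy, rfl⟩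
  · left; exact ⟨rfl, h⟩

lemma vS_le_succ (j : ℕ) (x : Fin m) :
    vS pref hlin hn j x ≤ vS pref hlin hn (j+1) x := by
  rcases vS_step pref hlin hn j with ⟨h, -⟩ | ⟨w, -, -, -, h⟩
  · rw [h]
  · rw [h, Function.update_apply]
    split_ifs with hx
    · subst hx; omega
    · exact le_rfl

lemma vS_succ_le (j : ℕ) (x : Fin m) :
    vS pref hlin hn (j+1) x ≤ vS pref hlin hn j x + 1 := by
  rcases vS_step pref hlin hn j with ⟨h, -⟩ | ⟨w, -, -, -, h⟩
  · rw [h]; omega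
  · rw [h, Function.update_apply]
    split_ifs with hx
    · subst hx; omega
    · omega

lemma vS_mono {j k : ℕ} (h : j ≤ k) (x : Fin m) :
    vS pref hlin hn j x ≤ vS pref hlin hn k x := by
  induction k with
  | zero => obtain rfl : j = 0 := Nat.le_zero.mp h; exact le_rfl
  | succ k ih =>
    rcases Nat.lt_or_ge j (k+1) with hlt | hge
    · exact le_trans (ih (by omega)) (vS_le_succ pref hlin hn k x)
    · have : j = k + 1 := by omega
      rw [this]

lemma vS_le_n (j : ℕ) (x : Fin m) : vS pref hlin hn j x ≤ n := by
  induction j with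
  | zero => rw [vS]; exact Nat.zero_le n
  | succ j ih =>
    rcases vS_step pref hlin hn j with ⟨h, -⟩ | ⟨w, hw, -, -, h⟩
    · rw [h]; exact ih
    · rw [h, Function.update_apply]
      split_ifs with hx
      · simp only [Finset.mem_filter] at hw
        subst hx; omega
      · exact ih

lemma vR_card_pos (hm : 0 < m) (j : ℕ) :
    0 < ((Finset.univ.filter fun x => vS pref hlin hn j x < n) : Finset (Fin m)).card := by
  induction j with
  | zero =>
    have : (Finset.univ.filter fun x => vS pref hlin hn 0 x < n) = (Finset.univ : Finset (Fin m)) := by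
      apply Finset.filter_true_of_mem
      intro x _
      rw [vS]; exact hn
    rw [this, Finset.card_univ, Fintype.card_fin]; exact hm
  | succ j ih =>
    rcases vS_step pref hlin hn j with ⟨h, -⟩ | ⟨w, hw, h2, -, h⟩
    · rw [h]; exact ih
    · obtain ⟨y, hy, hyw⟩ := Finset.exists_mem_ne (lt_of_lt_of_le one_lt_two h2) w
      have : y ∈ (Finset.univ.filter fun x => vS pref hlin hn (j+1) x < n) := by
        simp only [Finset.mem_filter] at hy ⊢
        refine ⟨Finset.mem_univ _, ?_⟩
        rw [h, Function.update_apply, if_neg hyw]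
        exact hy.2
      exact Finset.card_pos.mpr ⟨y, this⟩

lemma vR_subset {j k : ℕ} (h : j ≤ k) :
    (Finset.univ.filter fun x => vS pref hlin hn k x < n) ⊆
      (Finset.univ.filter fun x => vS pref hlin hn j x < n) := by
  intro x hx
  simp only [Finset.mem_filter] at hx ⊢
  exact ⟨Finset.mem_univ _, lt_of_le_of_lt (vS_mono pref hlin hn h x) hx.2⟩

lemma vS_sum_step (j : ℕ)
    (h2 : 2 ≤ ((Finset.univ.filter fun x => vS pref hlin hn j x < n) : Finset (Fin m)).card) :
    ∑ x, vS pref hlin hn (j+1) x = (∑ x, vS pref hlin hn j x) + 1 := by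
  rcases vS_step pref hlin hn j with ⟨-, hh⟩ | ⟨w, hw, -, -, h⟩
  · exact absurd h2 hh
  · rw [h, Finset.sum_update_of_mem (Finset.mem_univ w),
      Finset.sum_eq_sum_sdiff_singleton_add (Finset.mem_univ w) (vS pref hlin hn j)]
    omega

lemma vR_card_final (hm : 0 < m) :
    ((Finset.univ.filter fun x => vS pref hlin hn (n*m) x < n) : Finset (Fin m)).card = 1 := by
  by_contra hne
  have hpos := vR_card_pos pref hlin hn hm (n*m)
  have h2 : 2 ≤ ((Finset.univ.filter fun x => vS pref hlin hn (n*m) x < n) : Finset (Fin m)).card := by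
    omega
  have hall : ∀ j, j ≤ n*m →
      2 ≤ ((Finset.univ.filter fun x => vS pref hlin hn j x < n) : Finset (Fin m)).card :=
    fun j hj => le_trans h2 (Finset.card_le_card (vR_subset pref hlin hn hj))
  have hsum : ∀ j, j ≤ n*m → ∑ x, vS pref hlin hn j x = j := by
    intro j hj
    induction j with
    | zero =>
      apply Finset.sum_eq_zero
      intro x _
      rw [vS]
    | succ j ih =>
      rw [vS_sum_step pref hlin hn j (hall j (by omega)), ih (by omega)]
  have h1 := hsum (n*m) le_rfl
  set R := ((Finset.univ.filter fun x => vS pref hlin hn (n*m) x < n) : Finset (Fin m)) with hR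
  have hsplit := Finset.sum_filter_add_sum_filter_not Finset.univ
    (fun x => vS pref hlin hn (n*m) x < n) (vS pref hlin hn (n*m))
  rw [← hR] at hsplit
  rw [← hsplit] at h1
  have hA : ∑ x ∈ R, (vS pref hlin hn (n*m) x + 1) ≤ R.card * n := by
    apply Finset.sum_le_card_nsmul
    intro x hx
    simp only [hR, Finset.mem_filter] at hx
    omega
  have hA' : (∑ x ∈ R, vS pref hlin hn (n*m) x) + R.card ≤ R.card * n := by
    rw [Finset.sum_add_distrib, Finset.sum_const, smul_eq_mul, mul_one] at hA
    exact hA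
  have hBnd : ∑ x ∈ (Finset.univ.filter fun x => ¬ vS pref hlin hn (n*m) x < n), vS pref hlin hn (n*m) x
      ≤ (Finset.univ.filter fun x => ¬ vS pref hlin hn (n*m) x < n).card * n := by
    apply Finset.sum_le_card_nsmul
    intro x _
    exact vS_le_n pref hlin hn (n*m) x
  have hcards : R.card + (Finset.univ.filter fun x => ¬ vS pref hlin hn (n*m) x < n).card = m := by
    rw [hR, Finset.card_filter_add_card_filter_not, Finset.card_univ, Fintype.card_fin]
  have hmul : (R.card + (Finset.univ.filter fun x => ¬ vS pref hlin hn (n*m) x < n).card) * n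
      = R.card * n + (Finset.univ.filter fun x => ¬ vS pref hlin hn (n*m) x < n).card * n :=
    add_mul _ _ _
  rw [hcards] at hmul
  have hnm : m * n = n * m := Nat.mul_comm m n
  omega

lemma survivor_lt (hm : 0 < m) {c : Fin m}
    (hc : (Finset.univ.filter fun x => vS pref hlin hn (n*m) x < n) = {c})
    {j : ℕ} (hj : j ≤ n*m) : vS pref hlin hn j c < n := by
  have hcm : c ∈ (Finset.univ.filter fun x => vS pref hlin hn (n*m) x < n) := by
    rw [hc]; exact Finset.mem_singleton_self c
  simp only [Finset.mem_filter] at hcm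
  exact lt_of_le_of_lt (vS_mono pref hlin hn hj c) hcm.2

lemma final_eq_n (hm : 0 < m) {c : Fin m}
    (hc : (Finset.univ.filter fun x => vS pref hlin hn (n*m) x < n) = {c})
    {x : Fin m} (hx : x ≠ c) : vS pref hlin hn (n*m) x = n := by
  have : x ∉ (Finset.univ.filter fun x => vS pref hlin hn (n*m) x < n) := by
    rw [hc]; simpa using hx
  simp only [Finset.mem_filter, Finset.mem_univ, true_and, not_lt] at this
  exact le_antisymm (vS_le_n pref hlin hn (n*m) x) this

lemma fired_pref (hm : 0 < m) {c : Fin m}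
    (hc : (Finset.univ.filter fun x => vS pref hlin hn (n*m) x < n) = {c})
    {j : ℕ} (hj : j < n*m) {x : Fin m}
    (hchg : vS pref hlin hn (j+1) x ≠ vS pref hlin hn j x) (hx : x ≠ c) :
    pref ⟨j / m % n, Nat.mod_lt _ hn⟩ c x := by
  rcases vS_step pref hlin hn j with ⟨h, -⟩ | ⟨w, hw, -, hspec, h⟩
  · rw [h] at hchg; exact absurd rfl hchg
  · have hxw : x = w := by
      by_contra hxw
      rw [h, Function.update_apply, if_neg hxw] at hchg
      exact hchg rfl
    have hcR : c ∈ (Finset.univ.filter fun y => vS pref hlin hn j y < n) := by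
      simp only [Finset.mem_filter]
      exact ⟨Finset.mem_univ _, survivor_lt pref hlin hn hm hc (le_of_lt hj)⟩
    rcases hspec c hcR with hcw | hpref
    · exact absurd (hxw.trans hcw.symm) hx
    · rwa [hxw]

lemma telescope (K : ℕ) (x : Fin m) :
    ∑ j ∈ Finset.range K, (vS pref hlin hn (j+1) x - vS pref hlin hn j x)
      = vS pref hlin hn K x := by
  induction K with
  | zero => simp; rw [vS]
  | succ K ih =>
    rw [Finset.sum_range_succ, ih]
    have := vS_le_succ pref hlin hn K x
    omega

lemma step_sum_le_one (j : ℕ) (B : Finset (Fin m)) :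
    ∑ b ∈ B, (vS pref hlin hn (j+1) b - vS pref hlin hn j b) ≤ 1 := by
  classical
  rcases vS_step pref hlin hn j with ⟨h, -⟩ | ⟨w, hw, -, -, h⟩
  · rw [h]; simp
  · have he : ∀ b ∈ B, vS pref hlin hn (j+1) b - vS pref hlin hn j b
        = if b = w then 1 else 0 := by
      intro b _
      rw [h, Function.update_apply]
      split_ifs with hbw
      · subst hbw; omega
      · omega
    rw [Finset.sum_congr rfl he, Finset.sum_ite_eq' B w (fun _ => 1)]
    split_ifs <;> omega

end VetoProof

/-- The proportional veto core is nonempty: some candidate is blocked by no coalition. -/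
theorem veto_core_nonempty (m n : ℕ) (hm : 0 < m) (hn : 0 < n)
    (pref : Fin n → Fin m → Fin m → Prop)
    (hlin : ∀ i, IsStrictTotalOrder (Fin m) (pref i)) :
    ∃ c : Fin m, ∀ T : Finset (Fin n), ¬ Blocks m n pref T c := by
  classical
  obtain ⟨c, hc⟩ := Finset.card_eq_one.mp (VetoProof.vR_card_final pref hlin hn hm)
  refine ⟨c, ?_⟩
  rintro T ⟨B, hB, hcard⟩
  have hBm : B.card ≤ m := by
    simpa using Finset.card_le_univ B
  have hTn : T.card ≤ n := by
    simpa using Finset.card_le_univ T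
  rcases Finset.eq_empty_or_nonempty T with rfl | ⟨i₀, hi₀⟩
  · simp only [Finset.card_empty, Nat.cast_zero, mul_zero, zero_div, Int.ceil_zero] at hcard
    omega
  · -- every member of B is distinct from c
    have hbc : ∀ b ∈ B, b ≠ c := by
      intro b hb e
      subst e
      haveI := hlin i₀
      exact irrefl b (hB i₀ hi₀ b hb)
    -- key counting bound
    have hfin : ∀ b ∈ B, VetoProof.vS pref hlin hn (n*m) b = n := fun b hb =>
      VetoProof.final_eq_n pref hlin hn hm hc (hbc b hb)
    have key : n * B.card ≤ (n - T.card) * m := by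
      have e1 : n * B.card = ∑ b ∈ B, VetoProof.vS pref hlin hn (n*m) b := by
        rw [Finset.sum_congr rfl hfin, Finset.sum_const, smul_eq_mul, mul_comm]
      have e2 : ∑ b ∈ B, VetoProof.vS pref hlin hn (n*m) b
          = ∑ j ∈ Finset.range (n*m), ∑ b ∈ B,
              (VetoProof.vS pref hlin hn (j+1) b - VetoProof.vS pref hlin hn j b) := by
        rw [Finset.sum_comm]
        exact Finset.sum_congr rfl fun b _ => (VetoProof.telescope pref hlin hn (n*m) b).symm
      have hzero : ∀ j ∈ Finset.range (n*m), (⟨j / m % n, Nat.mod_lt _ hn⟩ : Fin n) ∈ T →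
          ∑ b ∈ B, (VetoProof.vS pref hlin hn (j+1) b - VetoProof.vS pref hlin hn j b) = 0 := by
        intro j hj hjT
        apply Finset.sum_eq_zero
        intro b hb
        by_contra hne
        have hchg : VetoProof.vS pref hlin hn (j+1) b ≠ VetoProof.vS pref hlin hn j b := by
          intro e; rw [e] at hne; omega
        have hp := VetoProof.fired_pref pref hlin hn hm hc (Finset.mem_range.mp hj) hchg (hbc b hb)
        haveI := hlin (⟨j / m % n, Nat.mod_lt _ hn⟩ : Fin n)
        exact asymm hp (hB _ hjT b hb)
      set A := (Finset.range (n*m)).filter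
        (fun j => (⟨j / m % n, Nat.mod_lt _ hn⟩ : Fin n) ∉ T) with hA
      have e3 : ∑ j ∈ Finset.range (n*m), ∑ b ∈ B,
            (VetoProof.vS pref hlin hn (j+1) b - VetoProof.vS pref hlin hn j b)
          ≤ A.card := by
        have hsplit := Finset.sum_filter_add_sum_filter_not (Finset.range (n*m))
          (fun j => (⟨j / m % n, Nat.mod_lt _ hn⟩ : Fin n) ∉ T)
          (fun j => ∑ b ∈ B, (VetoProof.vS pref hlin hn (j+1) b - VetoProof.vS pref hlin hn j b))
        rw [← hA] at hsplit
        have hz : ∑ j ∈ (Finset.range (n*m)).filter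
            (fun j => ¬ (⟨j / m % n, Nat.mod_lt _ hn⟩ : Fin n) ∉ T),
            ∑ b ∈ B, (VetoProof.vS pref hlin hn (j+1) b - VetoProof.vS pref hlin hn j b) = 0 := by
          apply Finset.sum_eq_zero
          intro j hj
          simp only [Finset.mem_filter, not_not] at hj
          exact hzero j (Finset.mem_range.mpr (Finset.mem_range.mp hj.1)) hj.2
        have hle : ∑ j ∈ A, ∑ b ∈ B,
            (VetoProof.vS pref hlin hn (j+1) b - VetoProof.vS pref hlin hn j b) ≤ A.card := by
          calc ∑ j ∈ A, ∑ b ∈ B,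
              (VetoProof.vS pref hlin hn (j+1) b - VetoProof.vS pref hlin hn j b)
              ≤ ∑ _j ∈ A, 1 :=
                Finset.sum_le_sum fun j _ => VetoProof.step_sum_le_one pref hlin hn j B
            _ = A.card := by simp
        omega
      have e4 : A.card ≤ (n - T.card) * m := by
        have hinj : ∀ j₁ ∈ A, ∀ j₂ ∈ A,
            ((⟨j₁ / m % n, Nat.mod_lt _ hn⟩ : Fin n), j₁ % m)
              = ((⟨j₂ / m % n, Nat.mod_lt _ hn⟩ : Fin n), j₂ % m) → j₁ = j₂ := by
          intro j₁ hj₁ j₂ hj₂ he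
          simp only [hA, Finset.mem_filter, Finset.mem_range] at hj₁ hj₂
          have h₁ : j₁ / m < n := (Nat.div_lt_iff_lt_mul hm).mpr (by omega)
          have h₂ : j₂ / m < n := (Nat.div_lt_iff_lt_mul hm).mpr (by omega)
          have hfst : j₁ / m % n = j₂ / m % n := congrArg Fin.val (congrArg Prod.fst he)
          have hsnd : j₁ % m = j₂ % m := congrArg Prod.snd he
          rw [Nat.mod_eq_of_lt h₁, Nat.mod_eq_of_lt h₂] at hfst
          have e : m * (j₁ / m) + j₁ % m = m * (j₂ / m) + j₂ % m := by
            rw [hfst, hsnd]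
          rwa [Nat.div_add_mod, Nat.div_add_mod] at e
        have hmaps : ∀ j ∈ A, ((⟨j / m % n, Nat.mod_lt _ hn⟩ : Fin n), j % m)
            ∈ (Tᶜ ×ˢ Finset.range m : Finset (Fin n × ℕ)) := by
          intro j hj
          simp only [hA, Finset.mem_filter] at hj
          simp only [Finset.mem_product, Finset.mem_compl, Finset.mem_range]
          exact ⟨hj.2, Nat.mod_lt _ hm⟩
        calc A.card ≤ ((Tᶜ ×ˢ Finset.range m : Finset (Fin n × ℕ))).card :=
              Finset.card_le_card_of_injOn _ hmaps hinj
          _ = (n - T.card) * m := by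
              rw [Finset.card_product, Finset.card_compl, Finset.card_range,
                Fintype.card_fin]
      omega
    -- arithmetic contradiction
    have hn' : (0:ℚ) < n := by exact_mod_cast hn
    have h2 : ((m:ℚ) - B.card) ≤ (⌈(m * T.card : ℚ) / n⌉ : ℚ) - 1 := by
      exact_mod_cast hcard
    have h3 : ((⌈(m * T.card : ℚ) / n⌉ : ℚ)) < (m * T.card : ℚ) / n + 1 :=
      Int.ceil_lt_add_one _
    have h4 : ((m:ℚ) - B.card) < (m * T.card : ℚ) / n := by linarith
    have h5 : (n:ℚ) * ((m:ℚ) - B.card) < m * T.card := by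
      have := mul_lt_mul_of_pos_left h4 hn'
      rwa [mul_div_cancel₀ _ (ne_of_gt hn')] at this
    have h6 : (n:ℚ) * B.card ≤ ((n:ℚ) - T.card) * m := by
      have : ((n * B.card : ℕ) : ℚ) ≤ (((n - T.card) * m : ℕ) : ℚ) := by exact_mod_cast key
      rwa [Nat.cast_mul, Nat.cast_mul, Nat.cast_sub hTn] at this
    linarith
end

section
/- Voting by veto tokens elects a candidate in the proportional veto core: in the cloned election with r copies of each voter and t copies of each candidate (where r·n = t·m − gcd(m,n), t > n·gcd(m,n)), if the voter-clones sequentially veto their least-preferred remaining candidate-clone in some order until gcd(m,n) clones remain, then any candidate with a surviving clone is unblocked in the original profile. -/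
lemma veto_arith (m n r t k g q : ℤ) (hg : 0 < g) (hn : 0 < n) (ht : 0 < t)
    (hgm : g ∣ m) (hgn : g ∣ n) (hrt : r * n + g = t * m) (hkt : k ≤ t)
    (hq1 : m * k ≤ q * n) (hq2 : q * n < m * k + n) : t * q ≤ r * k + t := by
  have hd : g ∣ q * n - m * k := dvd_sub (Dvd.dvd.mul_left hgn q) (hgm.mul_right k)
  have hle : q * n - m * k ≤ n - g := by
    by_contra h
    push_neg at h
    have hdvd : g ∣ n - (q * n - m * k) := dvd_sub hgn hd
    have hpos : 0 < n - (q * n - m * k) := by linarith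
    have := Int.le_of_dvd hpos hdvd
    linarith
  have h1 : t * (q * n - m * k) ≤ t * (n - g) := mul_le_mul_of_nonneg_left hle ht.le
  have h3 : t * q * n ≤ r * k * n + t * n := by nlinarith [mul_le_mul_of_nonneg_left hkt hg.le]
  have := (mul_le_mul_iff_of_pos_right hn).mp (by linarith : t * q * n ≤ (r * k + t) * n)
  linarith


/-- Voting by veto tokens selects from the proportional veto core.
The cloned election has `r` copies of each voter and `t` copies of each candidate,
where `r·n + gcd(m,n) = t·m` and `t > gcd(m,n)·n`.  The `r·n` voter-clones, in the
order `order`, successively veto (erase) a remaining candidate-clone that is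
worst for them among the remaining clones, leaving `gcd(m,n)` clones.  Any
candidate `c` with a surviving clone is unblocked in the original profile. -/
theorem veto_tokens_in_core (m n r t : ℕ) (hm : 0 < m) (hn : 0 < n)
    (pref : Fin n → Fin m → Fin m → Prop)
    (hlin : ∀ i, IsStrictTotalOrder (Fin m) (pref i))
    (hrt : r * n + Nat.gcd m n = t * m) (ht : t > Nat.gcd m n * n)
    (order : Fin (r * n) → Fin n)
    (horder : ∀ i : Fin n, (Finset.univ.filter (fun j => order j = i)).card = r)
    (S : Fin (r * n + 1) → Finset (Fin m × Fin t))
    (hS0 : S 0 = Finset.univ)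
    (hstep : ∀ j : Fin (r * n), ∃ x ∈ S j.castSucc,
      S j.succ = (S j.castSucc).erase x ∧
      ∀ y ∈ S j.castSucc, y.1 = x.1 ∨ pref (order j) y.1 x.1)
    (c : Fin m) (hc : ∃ cl : Fin t, (c, cl) ∈ S (Fin.last (r * n))) :
    ∀ T : Finset (Fin n), ¬ Blocks m n pref T c := by
  classical
  obtain ⟨cl, hcl⟩ := hc
  choose x hxmem hSe hworst using hstep
  -- monotonicity of S
  have step : ∀ j : Fin (r * n), S j.succ ⊆ S j.castSucc := by
    intro j
    rw [hSe j]
    exact Finset.erase_subset _ _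
  have mono : ∀ a b : Fin (r * n + 1), a ≤ b → S b ⊆ S a := by
    have key : ∀ b : ℕ, ∀ hb : b < r * n + 1, ∀ a : ℕ, ∀ ha : a < r * n + 1,
        a ≤ b → S ⟨b, hb⟩ ⊆ S ⟨a, ha⟩ := by
      intro b
      induction b with
      | zero =>
        intro hb a ha hab
        have : a = 0 := Nat.le_zero.mp hab
        subst this
        exact subset_rfl
      | succ b ih =>
        intro hb a ha hab
        rcases Nat.lt_or_ge a (b + 1) with h | h
        · have hb' : b < r * n := Nat.lt_of_succ_lt_succ hb
          have hstep' : S ⟨b + 1, hb⟩ ⊆ S ⟨b, Nat.lt_succ_of_lt hb'⟩ := by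
            have := step ⟨b, hb'⟩
            simpa [Fin.succ, Fin.castSucc, Fin.castAdd, Fin.castLE] using this
          exact hstep'.trans (ih (Nat.lt_succ_of_lt hb') a ha (Nat.lt_succ_iff.mp h))
        · have : a = b + 1 := le_antisymm hab h
          subst this
          exact subset_rfl
    intro a b hab
    exact key b.val b.isLt a.val a.isLt hab
  -- the surviving clone is in every S j
  have hclmem : ∀ j : Fin (r * n + 1), (c, cl) ∈ S j := by
    intro j
    exact mono j (Fin.last _) (Fin.le_last j) hcl
  rintro T ⟨B, hBpref, hBcard⟩
  have hT : T.Nonempty := by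
    by_contra hTe
    rw [Finset.not_nonempty_iff_eq_empty] at hTe
    subst hTe
    simp only [Finset.card_empty, Nat.cast_zero, mul_zero, zero_div, Int.ceil_zero] at hBcard
    have hBle : (B.card : ℤ) ≤ m := by
      exact_mod_cast (B.card_le_univ.trans_eq (by simp))
    omega
  -- c ∉ B
  have hcB : c ∉ B := fun hcB => (hlin (hT.choose)).irrefl c (hBpref _ hT.choose_spec c hcB)
  set W : Finset (Fin m) := Finset.univ \ B with hW
  have hcW : c ∈ W := Finset.mem_sdiff.mpr ⟨Finset.mem_univ c, hcB⟩
  have hWcard : (W.card : ℤ) = (m : ℤ) - B.card := by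
    have h1 : W.card = m - B.card := by
      rw [hW, Finset.card_sdiff_of_subset (Finset.subset_univ B)]
      simp
    have h2 : B.card ≤ m := B.card_le_univ.trans_eq (by simp)
    omega
  set g := Nat.gcd m n with hg
  have hg0 : 0 < g := Nat.gcd_pos_of_pos_left n hm
  have ht0 : 0 < t := lt_of_le_of_lt (Nat.zero_le _) ht
  set k := T.card with hk
  have hkn : k ≤ n := T.card_le_univ.trans_eq (by simp)
  have hkt : k ≤ t := hkn.trans (le_of_lt (lt_of_le_of_lt (Nat.le_mul_of_pos_left n hg0) ht))
  set q : ℤ := ⌈(m * k : ℚ) / n⌉ with hq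
  -- ceiling bounds
  have hn' : (0 : ℚ) < n := by exact_mod_cast hn
  have hq1 : (m : ℤ) * k ≤ q * n := by
    have h1 : (m * k : ℚ) / n ≤ (q : ℚ) := Int.le_ceil _
    have h2 : (m * k : ℚ) ≤ q * n := by
      rw [div_le_iff₀ hn'] at h1
      exact_mod_cast h1
    exact_mod_cast h2
  have hq2 : q * n < (m : ℤ) * k + n := by
    have h1 : (q : ℚ) < (m * k : ℚ) / n + 1 := Int.ceil_lt_add_one _
    have h2 : (q : ℚ) * n < (m * k : ℚ) + n := by
      rw [← sub_lt_iff_lt_add]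
      calc (q : ℚ) * n - n = ((q : ℚ) - 1) * n := by ring
        _ < ((m * k : ℚ) / n) * n := by
            apply mul_lt_mul_of_pos_right _ hn'
            linarith
        _ = (m * k : ℚ) := div_mul_cancel₀ _ (ne_of_gt hn')
    exact_mod_cast h2
  -- arithmetic: t * |W| ≤ r * k
  have harith : (t : ℤ) * q ≤ (r : ℤ) * k + t :=
    veto_arith m n r t k g q (by exact_mod_cast hg0) (by exact_mod_cast hn)
      (by exact_mod_cast ht0) (by exact_mod_cast Nat.gcd_dvd_left m n)
      (by exact_mod_cast Nat.gcd_dvd_right m n) (by exact_mod_cast hrt)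
      (by exact_mod_cast hkt) hq1 hq2
  have hWq : (W.card : ℤ) ≤ q - 1 := by rw [hWcard]; exact hBcard
  have hmain : (t : ℤ) * W.card ≤ (r : ℤ) * k := by
    have := mul_le_mul_of_nonneg_left hWq (by positivity : (0 : ℤ) ≤ t)
    linarith
  -- counting: the fibers of T-voters
  set J : Finset (Fin (r * n)) := Finset.univ.filter (fun j => order j ∈ T) with hJ
  have hJcard : J.card = r * k := by
    rw [Finset.card_eq_sum_card_fiberwise (f := order) (s := J) (t := T)
      (fun j hj => (Finset.mem_filter.mp hj).2)]
    have : ∀ i ∈ T, (J.filter (fun j => order j = i)).card = r := by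
      intro i hi
      have heq : J.filter (fun j => order j = i)
          = Finset.univ.filter (fun j => order j = i) := by
        ext j
        simp only [hJ, Finset.filter_filter, Finset.mem_filter, Finset.mem_univ, true_and]
        constructor
        · rintro ⟨-, h⟩; exact h
        · intro h; exact ⟨h ▸ hi, h⟩
      rw [heq, horder]
    rw [Finset.sum_congr rfl this, Finset.sum_const, smul_eq_mul, mul_comm]
  -- injection from J into (W ×ˢ univ).erase (c, cl)
  have hinj : ∀ j ∈ J, x j ∈ ((W ×ˢ (Finset.univ : Finset (Fin t))).erase (c, cl)) := by
    intro j hj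
    have hi : order j ∈ T := (Finset.mem_filter.mp hj).2
    have hccl : (c, cl) ∈ S j.castSucc := hclmem _
    have hne : x j ≠ (c, cl) := by
      intro h
      have : (c, cl) ∈ S j.succ := hclmem _
      rw [hSe j, h] at this
      exact (Finset.mem_erase.mp this).1 rfl
    have hxB : (x j).1 ∉ B := by
      intro hxB
      rcases hworst j (c, cl) hccl with h | h
      · exact hcB (by rw [show c = (x j).1 from h]; exact hxB)
      · exact (hlin (order j)).irrefl c ((hlin (order j)).trans _ _ _ h (hBpref _ hi _ hxB))
    refine Finset.mem_erase.mpr ⟨fun h => hne h, ?_⟩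
    exact Finset.mem_product.mpr ⟨Finset.mem_sdiff.mpr ⟨Finset.mem_univ _, hxB⟩, Finset.mem_univ _⟩
  have hkey : ∀ j1 j2 : Fin (r * n), j1 < j2 → x j1 ≠ x j2 := by
    intro j1 j2 hlt heq
    have hle : j1.succ ≤ j2.castSucc := by
      have hlt' : (j1 : ℕ) < (j2 : ℕ) := hlt
      rw [Fin.le_def, Fin.val_succ, Fin.coe_castSucc]
      omega
    have hx2 : x j2 ∈ S j1.succ := mono j1.succ j2.castSucc hle (hxmem j2)
    rw [hSe j1, heq] at hx2
    exact (Finset.mem_erase.mp hx2).1 rfl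
  have hxinj : Set.InjOn x J := by
    intro j1 _ j2 _ heq
    rcases lt_trichotomy j1 j2 with h | h | h
    · exact absurd heq (hkey j1 j2 h)
    · exact h
    · exact absurd heq.symm (hkey j2 j1 h)
  have hcount : J.card ≤ ((W ×ˢ (Finset.univ : Finset (Fin t))).erase (c, cl)).card :=
    Finset.card_le_card_of_injOn x hinj hxinj
  have hprodmem : (c, cl) ∈ W ×ˢ (Finset.univ : Finset (Fin t)) :=
    Finset.mem_product.mpr ⟨hcW, Finset.mem_univ _⟩
  rw [Finset.card_erase_of_mem hprodmem, Finset.card_product, Finset.card_univ,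
    Fintype.card_fin, hJcard] at hcount
  -- final contradiction
  have hWpos : 0 < W.card := Finset.card_pos.mpr ⟨c, hcW⟩
  have hpos : 0 < W.card * t := Nat.mul_pos hWpos ht0
  have h1 : r * k < W.card * t := lt_of_le_of_lt hcount (Nat.sub_lt hpos one_pos)
  have h2 : (r : ℤ) * k < (t : ℤ) * W.card := by
    rw [mul_comm (t : ℤ)]
    exact_mod_cast h1
  linarith
end

section
/- Veto by consumption elects a candidate in the proportional veto core: if candidate c is the last candidate to be fully eaten in the veto-by-consumption process, then c is not blocked by any coalition. -/
/-- Veto by consumption selects from the proportional veto core.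
The process runs in `K` rounds.  `alive k` is the set of candidates with
positive remaining capacity at the start of round `k`, `cap k d` the remaining
capacity of `d`, `dur k > 0` the duration of round `k`, and during round `k`
each voter `i` eats `eat k i`, a worst (for `i`) alive candidate.  Capacities
decrease according to how many voters eat each candidate, a candidate leaves
`alive` exactly when its capacity hits 0, and each round ends when some
candidate is fully eaten.  If every candidate is eventually eaten and `c`
survives into the last round (i.e. `c` is eaten last), then `c` is unblocked. -/
theorem veto_by_consumption_in_core (m n K : ℕ) (hm : 0 < m) (hn : 0 < n)
    (pref : Fin n → Fin m → Fin m → Prop)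
    (hlin : ∀ i, IsStrictTotalOrder (Fin m) (pref i))
    (alive : Fin (K + 1) → Finset (Fin m))
    (cap : Fin (K + 1) → Fin m → ℚ)
    (dur : Fin K → ℚ)
    (eat : Fin K → Fin n → Fin m)
    (halive0 : alive 0 = Finset.univ)
    (hcap0 : ∀ d, cap 0 d = 1)
    (hdur : ∀ k, 0 < dur k)
    (heat : ∀ k i, eat k i ∈ alive k.castSucc ∧
      ∀ d ∈ alive k.castSucc, d = eat k i ∨ pref i d (eat k i))
    (hcap : ∀ k d, cap k.succ d =
      cap k.castSucc d - dur k * ((Finset.univ.filter (fun i => eat k i = d)).card : ℚ))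
    (hnonneg : ∀ k d, 0 ≤ cap k d)
    (halive : ∀ k : Fin K, alive k.succ = (alive k.castSucc).filter (fun d => cap k.succ d ≠ 0))
    (hroundend : ∀ k : Fin K, ∃ d ∈ alive k.castSucc, cap k.succ d = 0)
    (hend : alive (Fin.last K) = ∅)
    (c : Fin m) (hc : ∀ k : Fin K, c ∈ alive k.castSucc) :
    ∀ T : Finset (Fin n), ¬ Blocks m n pref T c := by
  rintro T ⟨B, hB, hBcard⟩
  classical
  set W : Finset (Fin m) := Finset.univ \ B with hW
  -- voters in T always eat outside B
  have heatW : ∀ (k : Fin K), ∀ i ∈ T, eat k i ∈ W := by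
    intro k i hi
    simp only [hW, Finset.mem_sdiff, Finset.mem_univ, true_and]
    intro hb
    have hp := hB i hi (eat k i) hb
    rcases (heat k i).2 c (hc k) with h | h
    · rw [← h] at hp
      exact (hlin i).irrefl c hp
    · exact (hlin i).irrefl _ ((hlin i).trans _ _ _ hp h)
  -- a dead candidate has zero capacity
  have capzero : ∀ (k : Fin (K + 1)) (d : Fin m), d ∉ alive k → cap k d = 0 := by
    intro k
    induction k using Fin.induction with
    | zero =>
      intro d hd
      exact absurd (halive0 ▸ Finset.mem_univ d) hd
    | succ k ih =>
      intro d hd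
      rw [halive k, Finset.mem_filter] at hd
      push_neg at hd
      by_cases h : d ∈ alive k.castSucc
      · exact hd h
      · have h0 : cap k.castSucc d = 0 := ih d h
        have hcnt : (Finset.univ.filter (fun i => eat k i = d)).card = 0 := by
          rw [Finset.card_eq_zero, Finset.filter_eq_empty_iff]
          intro i _ he
          exact h (he ▸ (heat k i).1)
        rw [hcap k d, h0, hcnt]
        simp
  have hcaplast : ∀ d, cap (Fin.last K) d = 0 := fun d =>
    capzero _ d (by rw [hend]; exact Finset.notMem_empty d)
  -- each candidate is eaten exactly 1 unit in total
  have tele : ∀ d : Fin m,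
      ∑ k : Fin K, dur k * ((Finset.univ.filter (fun i => eat k i = d)).card : ℚ) = 1 := by
    intro d
    set g : ℕ → ℚ := fun j => cap ⟨min j K, by omega⟩ d with hg
    have h2 : ∀ k : Fin K,
        dur k * ((Finset.univ.filter (fun i => eat k i = d)).card : ℚ)
          = g k.val - g (k.val + 1) := by
      intro k
      have e1 : (⟨min k.val K, by omega⟩ : Fin (K + 1)) = k.castSucc := by
        ext
        simp [Nat.min_eq_left (le_of_lt k.isLt)]
      have e2 : (⟨min (k.val + 1) K, by omega⟩ : Fin (K + 1)) = k.succ := by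
        ext
        simp [Nat.min_eq_left k.isLt]
      simp only [hg, e1, e2]
      rw [hcap k d]
      ring
    rw [Finset.sum_congr rfl (fun k _ => h2 k)]
    rw [Fin.sum_univ_eq_sum_range (fun j => g j - g (j + 1)) K]
    rw [Finset.sum_range_sub' g K]
    have e0 : (⟨min 0 K, by omega⟩ : Fin (K + 1)) = 0 := by
      ext; simp
    have eK : (⟨min K K, by omega⟩ : Fin (K + 1)) = Fin.last K := by
      ext; simp [Fin.last]
    simp only [hg, e0, eK, hcap0 d, hcaplast d]
    ring
  -- total duration times n equals m
  have hS : (∑ k : Fin K, dur k) * n = m := by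
    calc (∑ k : Fin K, dur k) * n = ∑ k : Fin K, dur k * n := Finset.sum_mul ..
    _ = ∑ k : Fin K, ∑ d : Fin m,
          dur k * ((Finset.univ.filter (fun i => eat k i = d)).card : ℚ) := by
        refine Finset.sum_congr rfl fun k _ => ?_
        rw [← Finset.mul_sum]
        congr 1
        have hfib := Finset.card_eq_sum_card_fiberwise
          (fun i (_ : i ∈ (Finset.univ : Finset (Fin n))) => Finset.mem_univ (eat k i))
        rw [Finset.card_univ, Fintype.card_fin] at hfib
        exact_mod_cast congrArg (Nat.cast : ℕ → ℚ) hfib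
    _ = ∑ d : Fin m, ∑ k : Fin K,
          dur k * ((Finset.univ.filter (fun i => eat k i = d)).card : ℚ) :=
        Finset.sum_comm
    _ = ∑ d : Fin m, (1 : ℚ) := Finset.sum_congr rfl fun d _ => tele d
    _ = m := by simp
  -- T-consumption bounded by |W|
  have hTle : (∑ k : Fin K, dur k) * T.card ≤ (W.card : ℚ) := by
    calc (∑ k : Fin K, dur k) * T.card = ∑ k : Fin K, dur k * T.card := Finset.sum_mul ..
    _ = ∑ k : Fin K, ∑ d ∈ W, dur k * ((T.filter (fun i => eat k i = d)).card : ℚ) := by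
        refine Finset.sum_congr rfl fun k _ => ?_
        rw [← Finset.mul_sum]
        congr 1
        have hfib := Finset.card_eq_sum_card_fiberwise
          (fun i (hi : i ∈ T) => heatW k i hi)
        exact_mod_cast congrArg (Nat.cast : ℕ → ℚ) hfib
    _ = ∑ d ∈ W, ∑ k : Fin K, dur k * ((T.filter (fun i => eat k i = d)).card : ℚ) :=
        Finset.sum_comm
    _ ≤ ∑ d ∈ W, (1 : ℚ) := by
        refine Finset.sum_le_sum fun d _ => ?_
        rw [← tele d]
        refine Finset.sum_le_sum fun k _ => ?_
        refine mul_le_mul_of_nonneg_left ?_ (le_of_lt (hdur k))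
        exact_mod_cast Finset.card_le_card
          (Finset.filter_subset_filter _ (Finset.subset_univ T))
    _ = W.card := by simp
  -- arithmetic contradiction
  have hBsub : B.card ≤ m := by
    simpa using Finset.card_le_card (Finset.subset_univ B)
  have hWcard : (W.card : ℤ) = (m : ℤ) - B.card := by
    rw [hW, Finset.card_sdiff_of_subset (Finset.subset_univ B)]
    rw [Finset.card_univ, Fintype.card_fin]
    omega
  set q : ℚ := (m * T.card : ℚ) / n with hq
  have h1 : (W.card : ℚ) ≤ (⌈q⌉ : ℚ) - 1 := by
    have : (W.card : ℤ) ≤ ⌈q⌉ - 1 := by rw [hWcard]; exact hBcard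
    exact_mod_cast this
  have h2 : (⌈q⌉ : ℚ) < q + 1 := Int.ceil_lt_add_one q
  have hn' : (0 : ℚ) < n := by exact_mod_cast hn
  have h3 : q ≤ (W.card : ℚ) := by
    have hSval : (∑ k : Fin K, dur k) = m / n := by
      field_simp
      linarith [hS]
    calc q = (m / n) * T.card := by rw [hq]; ring
    _ = (∑ k : Fin K, dur k) * T.card := by rw [hSval]
    _ ≤ (W.card : ℚ) := hTle
  linarith
end
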